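/- Weak sequential compactness of the feasible set of the learning problem (intermediate claim in the proof of Theorem 4.1): Assume hypotheses (H1)–(H6). Then the set F = {(α,y,u) ∈ [α̲,ᾱ] × F_ad : (y,u) solves (P_{α,y_δ})} is nonempty, and every sequence (αⁿ,yⁿ,uⁿ) in F has a subsequence (α^{n_k}, y^{n_k}, u^{n_k}) such that α^{n_k} → α* in ℝ^r, (y^{n_k}, u^{n_k}) converges weakly in Y × U to some (y*,u*), and (α*,y*,u*) ∈ F. -/

import Mathlib

open Filter Topology ENNReal
open scoped RealInnerProductSpace

/-- Weak convergence of a sequence in a real normed space: convergence tested against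
all continuous linear functionals. -/
def WeakConv {X : Type*} [NormedAddCommGroup X] [NormedSpace ℝ X]
    (x : ℕ → X) (x₀ : X) : Prop :=
  ∀ f : X →L[ℝ] ℝ, Tendsto (fun n => f (x n)) atTop (𝓝 (f x₀))

/-- The feasible set `F_ad` of the lower level problem. -/
def Fad {Y U Z : Type*} [Zero Z] (Uad : Set U) (e : Y → U → Z) : Set (Y × U) :=
  {p | p.2 ∈ Uad ∧ e p.1 p.2 = 0}

/-- The Tikhonov functional `J_{α,yδ}` of the lower level problem, with values in `[0,∞]`. -/
noncomputable def Jfun {Y U Ytil : Type*} [NormedAddCommGroup Y] [NormedSpace ℝ Y]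
    [NormedAddCommGroup U] [NormedSpace ℝ U]
    [NormedAddCommGroup Ytil] [InnerProductSpace ℝ Ytil]
    {m r : ℕ} (ιY : Y →L[ℝ] Ytil) (Ψ : Fin r → U → ℝ≥0∞)
    (α : Fin r → ℝ) (yδ : Fin m → Ytil) (p : Y × U) : ℝ≥0∞ :=
  ENNReal.ofReal ((1 / (2 * (m : ℝ))) * ∑ j, ‖ιY p.1 - yδ j‖ ^ 2)
    + ∑ i, ENNReal.ofReal (α i) * Ψ i p.2

/-- `p = (y,u)` solves the lower level problem `(P_{α,yδ})`. -/
def Solves {Y U Z Ytil : Type*} [NormedAddCommGroup Y] [NormedSpace ℝ Y]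
    [NormedAddCommGroup U] [NormedSpace ℝ U]
    [NormedAddCommGroup Ytil] [InnerProductSpace ℝ Ytil] [Zero Z]
    {m r : ℕ} (Uad : Set U) (e : Y → U → Z) (ιY : Y →L[ℝ] Ytil)
    (Ψ : Fin r → U → ℝ≥0∞) (α : Fin r → ℝ) (yδ : Fin m → Ytil)
    (p : Y × U) : Prop :=
  p ∈ Fad Uad e ∧ ∀ q ∈ Fad Uad e, Jfun ιY Ψ α yδ p ≤ Jfun ιY Ψ α yδ q


section Aux

lemma vanish_on_subspace {X : Type*} [NormedAddCommGroup X] [NormedSpace ℝ X]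
    (p : Submodule ℝ X) (f : X →L[ℝ] ℝ) (c : ℝ) (h : ∀ a ∈ p, f a < c) :
    ∀ a ∈ p, f a = 0 := by
  intro a ha
  by_contra hfa
  have h2 : ∀ t : ℝ, t * f a < c := by
    intro t
    have := h (t • a) (p.smul_mem t ha)
    simpa using this
  have := h2 ((c+1)/ f a)
  rw [div_mul_cancel₀ _ hfa] at this; linarith

lemma mem_of_weakconv {X : Type*} [NormedAddCommGroup X] [NormedSpace ℝ X]
    {s : Set X} (hconv : Convex ℝ s) (hclosed : IsClosed s)
    {x : ℕ → X} {x₀ : X} (hx : ∀ n, x n ∈ s)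
    (hw : ∀ f : X →L[ℝ] ℝ, Tendsto (fun n => f (x n)) atTop (𝓝 (f x₀))) :
    x₀ ∈ s := by
  by_contra hx₀
  obtain ⟨f, u, hfs, hfx⟩ := geometric_hahn_banach_closed_point hconv hclosed hx₀
  have : f x₀ ≤ u := le_of_tendsto (hw f) (Eventually.of_forall fun n => (hfs _ (hx n)).le)
  linarith

lemma separable_of_dual_separable (E : Type*) [NormedAddCommGroup E] [NormedSpace ℝ E]
    [h : TopologicalSpace.SeparableSpace (StrongDual ℝ E)] :
    TopologicalSpace.SeparableSpace E := by
  obtain ⟨g, hg⟩ := TopologicalSpace.exists_dense_seq (StrongDual ℝ E)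
  have hsel : ∀ k : ℕ, ∃ x : E, ‖x‖ ≤ 1 ∧ ‖g k‖ / 2 ≤ |g k x| := by
    intro k
    rcases eq_or_ne (g k) 0 with h0 | h0
    · exact ⟨0, by simp [h0]⟩
    · have hk : ¬ (∀ x, ‖g k x‖ ≤ (‖g k‖/2) * ‖x‖) := by
        intro hb
        have := (g k).opNorm_le_bound (by positivity) hb
        have hpos : 0 < ‖g k‖ := norm_pos_iff.mpr h0
        linarith
      push_neg at hk
      obtain ⟨x, hx⟩ := hk
      have hxne : x ≠ 0 := by
        rintro rfl; simp at hx
      have hxpos : (0:ℝ) < ‖x‖ := norm_pos_iff.mpr hxne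
      refine ⟨‖x‖⁻¹ • x, by simp [norm_smul, inv_mul_le_one₀ hxpos], ?_⟩
      rw [Real.norm_eq_abs] at hx
      simp only [map_smul, smul_eq_mul, abs_mul, abs_inv, abs_norm]
      calc ‖g k‖/2 = ‖x‖⁻¹ * (‖g k‖/2 * ‖x‖) := by field_simp
        _ ≤ ‖x‖⁻¹ * |g k x| := by
            apply mul_le_mul_of_nonneg_left hx.le (by positivity)
  choose x hx1 hx2 using hsel
  have hdense : (Submodule.span ℝ (Set.range x)).topologicalClosure = ⊤ := by
    by_contra hne
    obtain ⟨z, hz⟩ : ∃ z : E, z ∉ (Submodule.span ℝ (Set.range x)).topologicalClosure := by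
      by_contra hz; push_neg at hz
      exact hne (Submodule.eq_top_iff'.2 hz)
    obtain ⟨f, u, hfs, hfz⟩ := geometric_hahn_banach_closed_point
      (Submodule.span ℝ (Set.range x)).topologicalClosure.convex
      (Submodule.isClosed_topologicalClosure _) hz
    have hvan := vanish_on_subspace _ f u hfs
    have hfne : f ≠ 0 := by
      intro h0
      have h00 : (0:ℝ) < u := by simpa using hfs 0 (Submodule.zero_mem _)
      rw [h0] at hfz; simp at hfz; linarith
    have hfpos : 0 < ‖f‖ := norm_pos_iff.mpr hfne
    obtain ⟨k, hk⟩ : ∃ k, ‖g k - f‖ < ‖f‖/4 := by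
      obtain ⟨k, hk⟩ := Metric.denseRange_iff.mp hg f (‖f‖/4) (by positivity)
      exact ⟨k, by simpa [dist_eq_norm'] using hk⟩
    have hgk : ‖f‖ - ‖f‖/4 ≤ ‖g k‖ := by
      have h1 : ‖f‖ - ‖g k‖ ≤ ‖f - g k‖ := norm_sub_norm_le f (g k)
      rw [norm_sub_rev] at h1
      linarith
    have hmem : x k ∈ (Submodule.span ℝ (Set.range x)).topologicalClosure :=
      (Submodule.le_topologicalClosure _) (Submodule.subset_span ⟨k, rfl⟩)
    have hxk0 : f (x k) = 0 := hvan _ hmem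
    have hb : |g k (x k)| ≤ ‖g k - f‖ := by
      have : |(g k - f) (x k)| ≤ ‖g k - f‖ * ‖x k‖ := by
        rw [← Real.norm_eq_abs]; exact (g k - f).le_opNorm _
      have h2 : (g k - f) (x k) = g k (x k) := by simp [hxk0]
      rw [h2] at this
      calc |g k (x k)| ≤ ‖g k - f‖ * ‖x k‖ := this
        _ ≤ ‖g k - f‖ * 1 := by
            apply mul_le_mul_of_nonneg_left (hx1 k) (norm_nonneg _)
        _ = ‖g k - f‖ := mul_one _
    have := hx2 k
    linarith
  have hsep : TopologicalSpace.IsSeparable (Set.univ : Set E) := by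
    have h1 := ((Set.countable_range x).isSeparable.span (R := ℝ)).closure
    have h2 : closure (Submodule.span ℝ (Set.range x) : Set E) = Set.univ := by
      have := congrArg (fun q : Submodule ℝ E => (q : Set E)) hdense
      simpa [Submodule.topologicalClosure_coe] using this
    rwa [h2] at h1
  exact TopologicalSpace.isSeparable_univ_iff.mp hsep

open NormedSpace in
lemma subspace_reflexive {X : Type*} [NormedAddCommGroup X] [NormedSpace ℝ X]
    (hX : Function.Surjective (inclusionInDoubleDual ℝ X))
    (p : Submodule ℝ X) (hp : IsClosed (p : Set X)) :
    Function.Surjective (inclusionInDoubleDual ℝ ↥p) := by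
  intro Λ
  let R : StrongDual ℝ X →L[ℝ] StrongDual ℝ ↥p := (ContinuousLinearMap.compL ℝ ↥p X ℝ).flip p.subtypeL
  obtain ⟨x, hx⟩ := hX (Λ.comp R)
  have hx' : ∀ f : StrongDual ℝ X, f x = Λ (f.comp p.subtypeL) := by
    intro f
    have h1 : (inclusionInDoubleDual ℝ X x) f = (Λ.comp R) f := by rw [hx]
    simpa [R, NormedSpace.dual_def] using h1
  have hxp : x ∈ p := by
    by_contra hxp
    obtain ⟨f, u, hfs, hfx⟩ := geometric_hahn_banach_closed_point p.convex hp hxp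
    have hvan := vanish_on_subspace p f u hfs
    have h0 : f.comp p.subtypeL = 0 := by
      ext a; exact hvan a a.2
    have := hx' f
    rw [h0] at this
    simp at this
    have h00 : (0:ℝ) < u := by simpa using hfs 0 (Submodule.zero_mem _)
    rw [this] at hfx
    linarith
  refine ⟨⟨x, hxp⟩, ?_⟩
  ext g
  obtain ⟨f, hf, -⟩ := exists_extension_norm_eq p g
  have hcomp : f.comp p.subtypeL = g := by ext a; exact hf a
  have h2 := hx' f
  rw [hcomp] at h2
  have h3 : f x = g ⟨x, hxp⟩ := hf ⟨x, hxp⟩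
  simpa [NormedSpace.dual_def, h3] using h2

open NormedSpace TopologicalSpace in
lemma weak_seq_compact {X : Type*} [NormedAddCommGroup X] [NormedSpace ℝ X]
    (hX : Function.Surjective (inclusionInDoubleDual ℝ X))
    (x : ℕ → X) (C : ℝ) (hC : ∀ n, ‖x n‖ ≤ C) :
    ∃ φ : ℕ → ℕ, StrictMono φ ∧ ∃ x₀ : X,
      ∀ f : X →L[ℝ] ℝ, Tendsto (fun k => f (x (φ k))) atTop (𝓝 (f x₀)) := by
  classical
  set p := (Submodule.span ℝ (Set.range x)).topologicalClosure with hp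
  have hpc : IsClosed (p : Set X) := Submodule.isClosed_topologicalClosure _
  have hmem : ∀ n, x n ∈ p :=
    fun n => (Submodule.le_topologicalClosure _) (Submodule.subset_span ⟨n, rfl⟩)
  set ξ : ℕ → ↥p := fun n => ⟨x n, hmem n⟩ with hξ
  have hξC : ∀ n, ‖ξ n‖ ≤ C := hC
  -- p is reflexive
  have hrefl := subspace_reflexive hX p hpc
  -- p is separable
  have hpsep : SeparableSpace ↥p := by
    have h1 : IsSeparable (p : Set X) := by
      have := ((Set.countable_range x).isSeparable.span (R := ℝ)).closure
      simpa [hp, Submodule.topologicalClosure_coe] using this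
    exact h1.separableSpace
  -- double dual of p is separable
  have hddsep : SeparableSpace (StrongDual ℝ (StrongDual ℝ ↥p)) := by
    have hcont : Continuous (inclusionInDoubleDual ℝ ↥p) :=
      (inclusionInDoubleDual ℝ ↥p).continuous
    have hdr : DenseRange (inclusionInDoubleDual ℝ ↥p) := hrefl.denseRange
    exact hdr.separableSpace hcont
  -- dual of p is separable
  have hdsep : SeparableSpace (StrongDual ℝ ↥p) := separable_of_dual_separable (StrongDual ℝ ↥p)
  obtain ⟨D, hD⟩ := exists_dense_seq (StrongDual ℝ ↥p)
  -- diagonal extraction via compactness of a product of intervals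
  set T : ℕ → (ℕ → ℝ) := fun n k => D k (ξ n) with hT
  set K : Set (ℕ → ℝ) := Set.pi Set.univ (fun k => Set.Icc (-(‖D k‖ * |C|)) (‖D k‖ * |C|))
  have hKc : IsCompact K := isCompact_univ_pi fun k => isCompact_Icc
  have hTK : ∀ n, T n ∈ K := by
    intro n k _
    have h1 : |D k (ξ n)| ≤ ‖D k‖ * ‖ξ n‖ := by
      rw [← Real.norm_eq_abs]; exact (D k).le_opNorm _
    have h2 : ‖ξ n‖ ≤ |C| := (hξC n).trans (le_abs_self C)
    have h3 : |D k (ξ n)| ≤ ‖D k‖ * |C| :=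
      h1.trans (mul_le_mul_of_nonneg_left h2 (norm_nonneg (D k)))
    exact abs_le.mp h3
  obtain ⟨ℓ, -, φ, hφ, hconv⟩ := hKc.tendsto_subseq hTK
  -- convergence against every functional on p
  have hCauchy : ∀ g : StrongDual ℝ ↥p, ∃ L : ℝ, Tendsto (fun k => g (ξ (φ k))) atTop (𝓝 L) := by
    intro g
    have hC0 : (0:ℝ) ≤ |C| := abs_nonneg C
    have key : CauchySeq (fun k => g (ξ (φ k))) := by
      rw [Metric.cauchySeq_iff]
      intro ε hε
      obtain ⟨j, hj⟩ := Metric.denseRange_iff.mp hD g (ε / (4 * (|C| + 1)))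
        (by positivity)
      have hjn : ‖D j - g‖ < ε / (4 * (|C| + 1)) := by
        simpa [dist_eq_norm' g (D j)] using hj
      have hDj : Tendsto (fun k => T (φ k) j) atTop (𝓝 (ℓ j)) := by
        have := hconv
        rw [tendsto_pi_nhds] at this
        exact this j
      rw [Metric.tendsto_atTop] at hDj
      obtain ⟨N, hN⟩ := hDj (ε/4) (by positivity)
      refine ⟨N, fun a ha b hb => ?_⟩
      have hgD : ∀ k, |g (ξ (φ k)) - D j (ξ (φ k))| ≤ ε / 4 := by
        intro k
        have h1 : |(g - D j) (ξ (φ k))| ≤ ‖g - D j‖ * ‖ξ (φ k)‖ := by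
          rw [← Real.norm_eq_abs]; exact (g - D j).le_opNorm _
        have h2 : ‖g - D j‖ * ‖ξ (φ k)‖ ≤ ‖g - D j‖ * (|C|+1) := by
          apply mul_le_mul_of_nonneg_left _ (norm_nonneg (g - D j))
          have := (hξC (φ k)).trans (le_abs_self C); linarith
        have h3 : ‖g - D j‖ ≤ ε / (4 * (|C| + 1)) := by
          rw [norm_sub_rev g (D j)]; exact hjn.le
        have h4 : ‖g - D j‖ * (|C|+1) ≤ ε / 4 := by
          rw [div_mul_eq_div_div] at h3
          calc ‖g - D j‖ * (|C|+1) ≤ (ε / 4 / (|C|+1)) * (|C|+1) := by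
                apply mul_le_mul_of_nonneg_right h3 (by positivity)
            _ = ε / 4 := by field_simp
        have h5 : (g - D j) (ξ (φ k)) = g (ξ (φ k)) - D j (ξ (φ k)) := by simp
        rw [h5] at h1
        linarith
      have hTa := hN a ha
      have hTb := hN b hb
      rw [Real.dist_eq] at hTa hTb ⊢
      have hta : T (φ a) j = D j (ξ (φ a)) := rfl
      have htb : T (φ b) j = D j (ξ (φ b)) := rfl
      rw [hta] at hTa; rw [htb] at hTb
      have := hgD a; have := hgD b
      have habs : |g (ξ (φ a)) - g (ξ (φ b))| ≤
          |g (ξ (φ a)) - D j (ξ (φ a))| + |D j (ξ (φ a)) - ℓ j| + |ℓ j - D j (ξ (φ b))|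
            + |D j (ξ (φ b)) - g (ξ (φ b))| := by
        have := abs_sub_le (g (ξ (φ a))) (D j (ξ (φ a))) (g (ξ (φ b)))
        have h7 := abs_sub_le (D j (ξ (φ a))) (D j (ξ (φ b))) (g (ξ (φ b)))
        have h8 := abs_sub_le (D j (ξ (φ a))) (ℓ j) (D j (ξ (φ b)))
        linarith
      have h9 : |ℓ j - D j (ξ (φ b))| = |D j (ξ (φ b)) - ℓ j| := abs_sub_comm _ _
      have h10 : |D j (ξ (φ b)) - g (ξ (φ b))| = |g (ξ (φ b)) - D j (ξ (φ b))| :=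
        abs_sub_comm _ _
      rw [h9, h10] at habs
      have := hgD a
      have := hgD b
      linarith
    exact cauchySeq_tendsto_of_complete key
  choose L hL using hCauchy
  -- the limit functional
  have hLadd : ∀ g₁ g₂ : StrongDual ℝ ↥p, L (g₁ + g₂) = L g₁ + L g₂ := by
    intro g₁ g₂
    refine tendsto_nhds_unique (hL (g₁ + g₂)) ?_
    have := (hL g₁).add (hL g₂)
    simpa using this
  have hLsmul : ∀ (c : ℝ) (g : StrongDual ℝ ↥p), L (c • g) = c * L g := by
    intro c g
    refine tendsto_nhds_unique (hL (c • g)) ?_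
    have := (hL g).const_mul c
    simpa using this
  have hLbound : ∀ g : StrongDual ℝ ↥p, |L g| ≤ |C| * ‖g‖ := by
    intro g
    have h1 : ∀ k, |g (ξ (φ k))| ≤ |C| * ‖g‖ := by
      intro k
      have := (g).le_opNorm (ξ (φ k))
      rw [← Real.norm_eq_abs]
      calc ‖g (ξ (φ k))‖ ≤ ‖g‖ * ‖ξ (φ k)‖ := this
        _ ≤ ‖g‖ * |C| := mul_le_mul_of_nonneg_left
            ((hξC (φ k)).trans (le_abs_self C)) (norm_nonneg g)
        _ = |C| * ‖g‖ := mul_comm _ _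
    have h2 : Tendsto (fun k => |g (ξ (φ k))|) atTop (𝓝 |L g|) := (hL g).abs
    exact le_of_tendsto h2 (Eventually.of_forall h1)
  let Λlin : StrongDual ℝ ↥p →ₗ[ℝ] ℝ :=
    { toFun := L, map_add' := hLadd, map_smul' := hLsmul }
  let Λ : StrongDual ℝ (StrongDual ℝ ↥p) := LinearMap.mkContinuous (E := StrongDual ℝ ↥p) Λlin |C|
    (fun g => by simpa [Λlin] using hLbound g)
  obtain ⟨ξ₀, hξ₀⟩ := hrefl Λ
  refine ⟨φ, hφ, (ξ₀ : X), ?_⟩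
  intro f
  have hf : ∀ k, f (x (φ k)) = (f.comp p.subtypeL) (ξ (φ k)) := fun k => rfl
  have hfx : f (ξ₀ : X) = (f.comp p.subtypeL) ξ₀ := rfl
  have hg := hL (f.comp p.subtypeL)
  have hval : (f.comp p.subtypeL) ξ₀ = L (f.comp p.subtypeL) := by
    have h1 : (inclusionInDoubleDual ℝ ↥p ξ₀) (f.comp p.subtypeL) = Λ (f.comp p.subtypeL) := by
      rw [hξ₀]
    simpa [NormedSpace.dual_def, Λ, Λlin] using h1
  rw [funext hf, hfx, hval]
  exact hg


lemma ennreal_liminf_add (u v : ℕ → ℝ≥0∞) :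
    liminf u atTop + liminf v atTop ≤ liminf (fun n => u n + v n) atTop := by
  rw [liminf_eq_iSup_iInf_of_nat, liminf_eq_iSup_iInf_of_nat, liminf_eq_iSup_iInf_of_nat]
  have hmono : ∀ w : ℕ → ℝ≥0∞, Monotone (fun n => ⨅ i ≥ n, w i) := by
    intro w n m hnm
    exact le_iInf₂ fun i hi => iInf₂_le i (hnm.trans hi)
  rw [ENNReal.iSup_add_iSup_of_monotone (hmono u) (hmono v)]
  apply iSup_mono
  intro n
  refine le_iInf₂ fun i hi => add_le_add (iInf₂_le i hi) (iInf₂_le i hi)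

lemma ennreal_liminf_sum {ι : Type*} (s : Finset ι) (f : ι → ℕ → ℝ≥0∞) :
    ∑ i ∈ s, liminf (f i) atTop ≤ liminf (fun n => ∑ i ∈ s, f i n) atTop := by
  classical
  induction s using Finset.induction_on with
  | empty => simp
  | insert a s hx ih =>
    rw [Finset.sum_insert hx]
    calc liminf (f a) atTop + ∑ i ∈ s, liminf (f i) atTop
        ≤ liminf (f a) atTop + liminf (fun n => ∑ i ∈ s, f i n) atTop := by
          exact add_le_add_right ih _
      _ ≤ liminf (fun n => f a n + ∑ i ∈ s, f i n) atTop := ennreal_liminf_add _ _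
      _ = liminf (fun n => ∑ i ∈ insert a s, f i n) atTop := by
          simp [Finset.sum_insert hx]

open scoped RealInnerProductSpace in
lemma normsq_weak_lsc {H : Type*} [NormedAddCommGroup H] [InnerProductSpace ℝ H]
    (x : ℕ → H) (x₀ c : H)
    (hw : Tendsto (fun n => ⟪x₀ - c, x n⟫) atTop (𝓝 ⟪x₀ - c, x₀⟫)) :
    ENNReal.ofReal (‖x₀ - c‖^2) ≤ liminf (fun n => ENNReal.ofReal (‖x n - c‖^2)) atTop := by
  set a := ‖x₀ - c‖ with ha
  rcases eq_or_lt_of_le (norm_nonneg (x₀ - c)) with h0 | hpos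
  · have haz : a = 0 := h0.symm
    rw [haz]; simp
  have h1 : Tendsto (fun n => ⟪x₀ - c, x n - c⟫) atTop (𝓝 (a^2)) := by
    have h2 : ∀ y : H, ⟪x₀ - c, y - c⟫ = ⟪x₀ - c, y⟫ - ⟪x₀ - c, c⟫ := by
      intro y; rw [inner_sub_right]
    simp only [h2]
    have h3 : ⟪x₀ - c, x₀⟫ - ⟪x₀ - c, c⟫ = a^2 := by
      rw [← inner_sub_right, real_inner_self_eq_norm_sq]
    rw [← h3]
    exact hw.sub_const _
  have h4 : liminf (fun n => ENNReal.ofReal ⟪x₀ - c, x n - c⟫) atTop = ENNReal.ofReal (a^2) :=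
    (ENNReal.tendsto_ofReal h1).liminf_eq
  have hsq : ENNReal.ofReal (a^2) = ENNReal.ofReal a * ENNReal.ofReal a := by
    rw [sq, ENNReal.ofReal_mul (norm_nonneg _)]
  have h5 : liminf (fun n => ENNReal.ofReal ⟪x₀ - c, x n - c⟫) atTop ≤
      liminf (fun n => ENNReal.ofReal a * ENNReal.ofReal ‖x n - c‖) atTop := by
    exact liminf_le_liminf (Eventually.of_forall fun n => by
      rw [← ENNReal.ofReal_mul (norm_nonneg _)]
      exact ENNReal.ofReal_le_ofReal (real_inner_le_norm _ _))
  set L := liminf (fun n => ENNReal.ofReal ‖x n - c‖) atTop with hL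
  have h6 : liminf (fun n => ENNReal.ofReal a * ENNReal.ofReal ‖x n - c‖) atTop ≤
      ENNReal.ofReal a * L := by
    have := ENNReal.liminf_mul_le (f := atTop)
      (u := fun _ : ℕ => ENNReal.ofReal a) (v := fun n => ENNReal.ofReal ‖x n - c‖)
      (Or.inl (by rw [limsup_const]; exact (ENNReal.ofReal_pos.mpr hpos).ne'))
      (Or.inl (by rw [limsup_const]; exact ENNReal.ofReal_ne_top))
    rwa [limsup_const] at this
  have h7 : ENNReal.ofReal a ≤ L := by
    have h8 : ENNReal.ofReal a * ENNReal.ofReal a ≤ ENNReal.ofReal a * L := by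
      rw [← hsq, ← h4]
      exact h5.trans h6
    exact (ENNReal.mul_le_mul_iff_right (ENNReal.ofReal_pos.mpr hpos).ne'
      ENNReal.ofReal_ne_top).mp h8
  calc ENNReal.ofReal (a^2) = ENNReal.ofReal a * ENNReal.ofReal a := hsq
    _ ≤ L * L := mul_le_mul' h7 h7
    _ ≤ liminf (fun n => ENNReal.ofReal ‖x n - c‖ * ENNReal.ofReal ‖x n - c‖) atTop :=
        ENNReal.le_liminf_mul
    _ = liminf (fun n => ENNReal.ofReal (‖x n - c‖^2)) atTop := by
        congr 1; funext n; rw [sq, ENNReal.ofReal_mul (norm_nonneg _)]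

lemma exists_norm_tendsto_atTop {U : Type*} [NormedAddCommGroup U] (u : ℕ → U)
    (h : ¬ ∃ C : ℝ, ∀ n, ‖u n‖ ≤ C) :
    ∃ φ : ℕ → ℕ, StrictMono φ ∧ Tendsto (fun n => ‖u (φ n)‖) atTop atTop := by
  have hfreq : ∀ N : ℕ, ∃ᶠ k in atTop, (N:ℝ) ≤ ‖u k‖ := by
    intro N
    rw [frequently_atTop]
    intro a
    by_contra hcon
    push_neg at hcon
    apply h
    classical
    refine ⟨max (N:ℝ) ((Finset.range (a+1)).sup' (by simp) (fun k => ‖u k‖)), fun k => ?_⟩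
    rcases lt_or_ge k (a+1) with hk | hk
    · exact le_max_of_le_right (Finset.le_sup' (fun k => ‖u k‖) (Finset.mem_range.mpr hk))
    · exact le_max_of_le_left (hcon k (by omega)).le
  obtain ⟨φ, hφ, hP⟩ := Filter.extraction_forall_of_frequently hfreq
  exact ⟨φ, hφ, tendsto_atTop_mono hP tendsto_natCast_atTop_atTop⟩

end Aux

variable {Y U Util Ytil Z : Type*}
  [NormedAddCommGroup Y] [NormedSpace ℝ Y] [CompleteSpace Y]
  [NormedAddCommGroup U] [NormedSpace ℝ U] [CompleteSpace U]
  [NormedAddCommGroup Util] [InnerProductSpace ℝ Util] [CompleteSpace Util]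
  [NormedAddCommGroup Ytil] [InnerProductSpace ℝ Ytil] [CompleteSpace Ytil]
  [NormedAddCommGroup Z] [NormedSpace ℝ Z] [CompleteSpace Z]


section Core

open NormedSpace

/-- Convergence of the Tikhonov functional at a fixed point, as parameters converge
within the box. -/
lemma Jfun_tendsto_param {m r : ℕ} (ιY : Y →L[ℝ] Ytil) (Ψ : Fin r → U → ℝ≥0∞)
    (αlo : Fin r → ℝ) (hαpos : ∀ i, 0 < αlo i)
    (αseq : ℕ → Fin r → ℝ) (αstar : Fin r → ℝ)
    (hlo : ∀ n i, αlo i ≤ αseq n i) (hlostar : ∀ i, αlo i ≤ αstar i)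
    (hconv : ∀ i, Tendsto (fun n => αseq n i) atTop (𝓝 (αstar i)))
    (yδ : Fin m → Ytil) (q : Y × U) :
    Tendsto (fun n => Jfun ιY Ψ (αseq n) yδ q) atTop (𝓝 (Jfun ιY Ψ αstar yδ q)) := by
  simp only [Jfun]
  apply Tendsto.const_add
  apply tendsto_finset_sum
  intro i _
  rcases eq_or_ne (Ψ i q.2) ⊤ with htop | htop
  · rw [htop]
    have hconst : ∀ β : Fin r → ℝ, αlo i ≤ β i →
        ENNReal.ofReal (β i) * (⊤ : ℝ≥0∞) = ⊤ := by
      intro β hβ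
      exact ENNReal.mul_top (ENNReal.ofReal_pos.mpr ((hαpos i).trans_le hβ)).ne'
    rw [hconst αstar (hlostar i)]
    have : (fun n => ENNReal.ofReal (αseq n i) * (⊤ : ℝ≥0∞)) = fun _ => (⊤ : ℝ≥0∞) := by
      funext n; exact hconst (αseq n) (hlo n i)
    rw [this]
    exact tendsto_const_nhds
  · exact ENNReal.Tendsto.mul_const (ENNReal.tendsto_ofReal (hconv i)) (Or.inr htop)

/-- Core extraction lemma: from any sequence of feasible points with uniformly bounded
Tikhonov functional values, one can extract weakly converging subsequences whose limit is
feasible and satisfies a lower semicontinuity estimate. -/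
lemma core_extract
    (hYrefl : Function.Surjective (NormedSpace.inclusionInDoubleDual ℝ Y))
    (hUrefl : Function.Surjective (NormedSpace.inclusionInDoubleDual ℝ U))
    {m r : ℕ} (hr : 0 < r)
    (ιY : Y →L[ℝ] Ytil)
    (Uad : Set U) (e : Y → U → Z) (Ψ : Fin r → U → ℝ≥0∞)
    (αlo αhi : Fin r → ℝ) (hαpos : ∀ i, 0 < αlo i)
    (hH1 : Convex ℝ Uad ∧ IsClosed Uad)
    (hH3 : ∀ (y : ℕ → Y) (u : ℕ → U) (ybar : Y) (ubar : U),
      (∀ n, u n ∈ Uad) → ubar ∈ Uad → (∀ n, e (y n) (u n) = 0) →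
      WeakConv (fun n => (y n, u n)) (ybar, ubar) → e ybar ubar = 0)
    (hH4 : ∀ (y : ℕ → Y) (u : ℕ → U), (∀ n, (y n, u n) ∈ Fad Uad e) →
      (∃ C : ℝ, ∀ n, ‖u n‖ ≤ C) → ∃ C : ℝ, ∀ n, ‖y n‖ ≤ C)
    (hH5coer : ∀ u : ℕ → U, Tendsto (fun n => ‖u n‖) atTop atTop →
      Tendsto (fun n => ∑ i, Ψ i (u n)) atTop (𝓝 (⊤ : ℝ≥0∞)))
    (hH6 : ∀ (i : Fin r) (u : ℕ → U) (ubar : U), WeakConv u ubar →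
      Ψ i ubar ≤ Filter.liminf (fun n => Ψ i (u n)) atTop)
    (yδ : Fin m → Ytil)
    (B : ℝ≥0∞) (hB : B ≠ ⊤)
    (αseq : ℕ → Fin r → ℝ) (y : ℕ → Y) (u : ℕ → U)
    (hbox : ∀ n i, αlo i ≤ αseq n i ∧ αseq n i ≤ αhi i)
    (hfeas : ∀ n, (y n, u n) ∈ Fad Uad e)
    (hJB : ∀ n, Jfun ιY Ψ (αseq n) yδ (y n, u n) ≤ B) :
    ∃ φ : ℕ → ℕ, StrictMono φ ∧ ∃ (αstar : Fin r → ℝ) (p : Y × U),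
      (∀ i, Tendsto (fun k => αseq (φ k) i) atTop (𝓝 (αstar i))) ∧
      WeakConv (fun k => (y (φ k), u (φ k))) p ∧
      (∀ i, αlo i ≤ αstar i ∧ αstar i ≤ αhi i) ∧
      p ∈ Fad Uad e ∧
      Jfun ιY Ψ αstar yδ p ≤
        liminf (fun k => Jfun ιY Ψ (αseq (φ k)) yδ (y (φ k), u (φ k))) atTop := by
  classical
  haveI : Nonempty (Fin r) := ⟨⟨0, hr⟩⟩
  -- uniform bound on ∑ Ψ
  set amin : ℝ := Finset.univ.inf' Finset.univ_nonempty αlo with hamin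
  have haminpos : 0 < amin := by
    rw [hamin, Finset.lt_inf'_iff]
    exact fun i _ => hαpos i
  have haminle : ∀ i, amin ≤ αlo i := fun i => Finset.inf'_le _ (Finset.mem_univ i)
  set M : ℝ≥0∞ := (ENNReal.ofReal amin)⁻¹ * B with hM
  have hMne : M ≠ ⊤ := by
    rw [hM]
    exact ENNReal.mul_ne_top (ENNReal.inv_ne_top.mpr (ENNReal.ofReal_pos.mpr haminpos).ne') hB
  have hΨB : ∀ n, ∑ i, Ψ i (u n) ≤ M := by
    intro n
    have h1 : ENNReal.ofReal amin * ∑ i, Ψ i (u n) ≤ B := by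
      calc ENNReal.ofReal amin * ∑ i, Ψ i (u n)
          = ∑ i, ENNReal.ofReal amin * Ψ i (u n) := Finset.mul_sum _ _ _
        _ ≤ ∑ i, ENNReal.ofReal (αseq n i) * Ψ i (u n) := by
            apply Finset.sum_le_sum
            intro i _
            exact mul_le_mul_left
              (ENNReal.ofReal_le_ofReal ((haminle i).trans (hbox n i).1)) _
        _ ≤ Jfun ιY Ψ (αseq n) yδ (y n, u n) := le_add_self
        _ ≤ B := hJB n
    calc ∑ i, Ψ i (u n)
        = (ENNReal.ofReal amin)⁻¹ * (ENNReal.ofReal amin * ∑ i, Ψ i (u n)) := by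
          rw [← mul_assoc, ENNReal.inv_mul_cancel (ENNReal.ofReal_pos.mpr haminpos).ne'
            ENNReal.ofReal_ne_top, one_mul]
      _ ≤ (ENNReal.ofReal amin)⁻¹ * B :=
          mul_le_mul_right h1 _
  -- u is bounded in norm
  have hubdd : ∃ C : ℝ, ∀ n, ‖u n‖ ≤ C := by
    by_contra hcon
    obtain ⟨φ0, hφ0, htend⟩ := exists_norm_tendsto_atTop u hcon
    have := hH5coer (fun n => u (φ0 n)) htend
    have hev : ∀ᶠ n in atTop, M < ∑ i, Ψ i (u (φ0 n)) :=
      this.eventually (lt_mem_nhds (lt_top_iff_ne_top.mpr hMne))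
    obtain ⟨n, hn⟩ := hev.exists
    exact absurd (hΨB (φ0 n)) (not_le.mpr hn)
  obtain ⟨Cu, hCu⟩ := hubdd
  obtain ⟨Cy, hCy⟩ := hH4 y u hfeas ⟨Cu, hCu⟩
  -- extract α convergence
  have hαmem : ∀ n, αseq n ∈ Set.Icc αlo αhi := fun n =>
    ⟨fun i => (hbox n i).1, fun i => (hbox n i).2⟩
  obtain ⟨αstar, hαstarmem, φ1, hφ1, hαconv⟩ :=
    (isCompact_Icc (a := αlo) (b := αhi)).tendsto_subseq hαmem
  -- extract weak convergence of y
  obtain ⟨φ2, hφ2, ystar, hyconv⟩ :=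
    weak_seq_compact hYrefl (fun n => y (φ1 n)) Cy (fun n => hCy (φ1 n))
  -- extract weak convergence of u
  obtain ⟨φ3, hφ3, ustar, huconv⟩ :=
    weak_seq_compact hUrefl (fun n => u (φ1 (φ2 n))) Cu (fun n => hCu (φ1 (φ2 n)))
  set φ : ℕ → ℕ := fun n => φ1 (φ2 (φ3 n)) with hφdef
  have hφ : StrictMono φ := hφ1.comp (hφ2.comp hφ3)
  -- convergence of parameters along φ
  have hαconvφ : ∀ i, Tendsto (fun k => αseq (φ k) i) atTop (𝓝 (αstar i)) := by
    intro i
    have h1 : Tendsto (fun k => αseq (φ1 k)) atTop (𝓝 αstar) := hαconv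
    have h2 : Tendsto (fun k => αseq (φ k)) atTop (𝓝 αstar) :=
      h1.comp ((hφ2.comp hφ3).tendsto_atTop)
    rw [tendsto_pi_nhds] at h2
    exact h2 i
  -- weak convergence of y along φ
  have hyw : ∀ f : Y →L[ℝ] ℝ, Tendsto (fun k => f (y (φ k))) atTop (𝓝 (f ystar)) := by
    intro f
    exact (hyconv f).comp hφ3.tendsto_atTop
  have huw : ∀ f : U →L[ℝ] ℝ, Tendsto (fun k => f (u (φ k))) atTop (𝓝 (f ustar)) := huconv
  -- weak convergence of the pair
  have hpw : WeakConv (fun k => (y (φ k), u (φ k))) (ystar, ustar) := by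
    intro f
    have hsplit : ∀ (a : Y) (b : U), f (a, b) =
        (f.comp (ContinuousLinearMap.inl ℝ Y U)) a
          + (f.comp (ContinuousLinearMap.inr ℝ Y U)) b := by
      intro a b
      simp only [ContinuousLinearMap.comp_apply, ContinuousLinearMap.inl_apply,
        ContinuousLinearMap.inr_apply]
      rw [← map_add]
      congr 1
      simp
    simp only [hsplit]
    exact (hyw _).add (huw _)
  -- feasibility of the limit
  have hustarUad : ustar ∈ Uad :=
    mem_of_weakconv hH1.1 hH1.2 (fun k => (hfeas (φ k)).1) huw
  have hestar : e ystar ustar = 0 :=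
    hH3 (fun k => y (φ k)) (fun k => u (φ k)) ystar ustar
      (fun k => (hfeas (φ k)).1) hustarUad (fun k => (hfeas (φ k)).2) hpw
  refine ⟨φ, hφ, αstar, (ystar, ustar), hαconvφ, hpw,
    fun i => ⟨hαstarmem.1 i, hαstarmem.2 i⟩, ⟨hustarUad, hestar⟩, ?_⟩
  -- lower semicontinuity estimate
  set c₀ : ℝ := 1 / (2 * (m : ℝ)) with hc₀
  have hc₀nonneg : 0 ≤ c₀ := by positivity
  simp only [Jfun]
  -- fidelity term
  have hfid : ENNReal.ofReal (c₀ * ∑ j, ‖ιY ystar - yδ j‖ ^ 2) ≤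
      liminf (fun k => ENNReal.ofReal (c₀ * ∑ j, ‖ιY (y (φ k)) - yδ j‖ ^ 2)) atTop := by
    have hsum : ∀ (w : Y), ENNReal.ofReal (c₀ * ∑ j, ‖ιY w - yδ j‖ ^ 2)
        = ENNReal.ofReal c₀ * ∑ j, ENNReal.ofReal (‖ιY w - yδ j‖ ^ 2) := by
      intro w
      rw [ENNReal.ofReal_mul hc₀nonneg,
        ENNReal.ofReal_sum_of_nonneg (fun j _ => by positivity)]
    simp only [hsum]
    have hterm : ∀ j : Fin m, ENNReal.ofReal (‖ιY ystar - yδ j‖ ^ 2) ≤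
        liminf (fun k => ENNReal.ofReal (‖ιY (y (φ k)) - yδ j‖ ^ 2)) atTop := by
      intro j
      apply normsq_weak_lsc (fun k => ιY (y (φ k))) (ιY ystar) (yδ j)
      have := hyw (((innerSL ℝ) (ιY ystar - yδ j)).comp ιY)
      simpa only [ContinuousLinearMap.comp_apply, innerSL_apply_apply] using this
    calc ENNReal.ofReal c₀ * ∑ j, ENNReal.ofReal (‖ιY ystar - yδ j‖ ^ 2)
        ≤ ENNReal.ofReal c₀ *
            ∑ j, liminf (fun k => ENNReal.ofReal (‖ιY (y (φ k)) - yδ j‖ ^ 2)) atTop := by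
          exact mul_le_mul_right (Finset.sum_le_sum fun j _ => hterm j) _
      _ ≤ ENNReal.ofReal c₀ *
            liminf (fun k => ∑ j, ENNReal.ofReal (‖ιY (y (φ k)) - yδ j‖ ^ 2)) atTop :=
          mul_le_mul_right (ennreal_liminf_sum _ _) _
      _ ≤ liminf (fun k =>
            ENNReal.ofReal c₀ * ∑ j, ENNReal.ofReal (‖ιY (y (φ k)) - yδ j‖ ^ 2)) atTop := by
          have := ENNReal.le_liminf_mul (f := atTop)
            (u := fun _ : ℕ => ENNReal.ofReal c₀)
            (v := fun k => ∑ j, ENNReal.ofReal (‖ιY (y (φ k)) - yδ j‖ ^ 2))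
          rwa [liminf_const] at this
  -- regularization terms
  have hreg : ∀ i : Fin r, ENNReal.ofReal (αstar i) * Ψ i ustar ≤
      liminf (fun k => ENNReal.ofReal (αseq (φ k) i) * Ψ i (u (φ k))) atTop := by
    intro i
    have h1 : liminf (fun k => ENNReal.ofReal (αseq (φ k) i)) atTop
        = ENNReal.ofReal (αstar i) :=
      (ENNReal.tendsto_ofReal (hαconvφ i)).liminf_eq
    have h2 : Ψ i ustar ≤ liminf (fun k => Ψ i (u (φ k))) atTop :=
      hH6 i (fun k => u (φ k)) ustar huw
    calc ENNReal.ofReal (αstar i) * Ψ i ustar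
        ≤ liminf (fun k => ENNReal.ofReal (αseq (φ k) i)) atTop
            * liminf (fun k => Ψ i (u (φ k))) atTop := by
          rw [h1]; exact mul_le_mul_right h2 _
      _ ≤ liminf (fun k => ENNReal.ofReal (αseq (φ k) i) * Ψ i (u (φ k))) atTop :=
          ENNReal.le_liminf_mul
  calc ENNReal.ofReal (c₀ * ∑ j, ‖ιY ystar - yδ j‖ ^ 2)
        + ∑ i, ENNReal.ofReal (αstar i) * Ψ i ustar
      ≤ liminf (fun k => ENNReal.ofReal (c₀ * ∑ j, ‖ιY (y (φ k)) - yδ j‖ ^ 2)) atTop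
        + ∑ i, liminf (fun k => ENNReal.ofReal (αseq (φ k) i) * Ψ i (u (φ k))) atTop :=
        add_le_add hfid (Finset.sum_le_sum fun i _ => hreg i)
    _ ≤ liminf (fun k => ENNReal.ofReal (c₀ * ∑ j, ‖ιY (y (φ k)) - yδ j‖ ^ 2)) atTop
        + liminf (fun k => ∑ i, ENNReal.ofReal (αseq (φ k) i) * Ψ i (u (φ k))) atTop :=
        add_le_add_right (ennreal_liminf_sum _ _) _
    _ ≤ liminf (fun k => ENNReal.ofReal (c₀ * ∑ j, ‖ιY (y (φ k)) - yδ j‖ ^ 2)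
        + ∑ i, ENNReal.ofReal (αseq (φ k) i) * Ψ i (u (φ k))) atTop :=
        ennreal_liminf_add _ _

end Core

/-- Weak sequential compactness of the feasible set of the learning problem
(intermediate claim in the proof of Theorem 4.1), under (H1)–(H6): the feasible set
`F = {(α,y,u) : α ∈ [αlo,αhi], (y,u) solves (P_{α,yδ})}` is nonempty, and every
sequence in `F` has a subsequence whose parameters converge and whose states/controls
converge weakly, with limit again in `F`. -/
theorem learning_feasible_set_weakly_sequentially_compact
    (hYrefl : Function.Surjective (NormedSpace.inclusionInDoubleDual ℝ Y))
    (hUrefl : Function.Surjective (NormedSpace.inclusionInDoubleDual ℝ U))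
    {m r : ℕ} (hm : 0 < m) (hr : 0 < r)
    (ιY : Y →L[ℝ] Ytil) (hιY : Function.Injective ιY)
    (Uad : Set U) (e : Y → U → Z) (Ψ : Fin r → U → ℝ≥0∞)
    (αlo αhi : Fin r → ℝ) (hαpos : ∀ i, 0 < αlo i) (hαle : ∀ i, αlo i ≤ αhi i)
    (hH1 : Convex ℝ Uad ∧ IsClosed Uad)
    (hH2 : (Fad Uad e).Nonempty)
    (hH3 : ∀ (y : ℕ → Y) (u : ℕ → U) (ybar : Y) (ubar : U),
      (∀ n, u n ∈ Uad) → ubar ∈ Uad → (∀ n, e (y n) (u n) = 0) →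
      WeakConv (fun n => (y n, u n)) (ybar, ubar) → e ybar ubar = 0)
    (hH4 : ∀ (y : ℕ → Y) (u : ℕ → U), (∀ n, (y n, u n) ∈ Fad Uad e) →
      (∃ C : ℝ, ∀ n, ‖u n‖ ≤ C) → ∃ C : ℝ, ∀ n, ‖y n‖ ≤ C)
    (hH5coer : ∀ u : ℕ → U, Tendsto (fun n => ‖u n‖) atTop atTop →
      Tendsto (fun n => ∑ i, Ψ i (u n)) atTop (𝓝 (⊤ : ℝ≥0∞)))
    (hH5prop : ∃ p ∈ Fad Uad e, ∑ i, Ψ i p.2 ≠ ⊤)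
    (hH6 : ∀ (i : Fin r) (u : ℕ → U) (ubar : U), WeakConv u ubar →
      Ψ i ubar ≤ Filter.liminf (fun n => Ψ i (u n)) atTop)
    (yδ : Fin m → Ytil) :
    (∃ (α : Fin r → ℝ) (p : Y × U), (∀ i, αlo i ≤ α i ∧ α i ≤ αhi i) ∧
        Solves Uad e ιY Ψ α yδ p) ∧
    ∀ (αseq : ℕ → Fin r → ℝ) (y : ℕ → Y) (u : ℕ → U),
      (∀ n i, αlo i ≤ αseq n i ∧ αseq n i ≤ αhi i) →
      (∀ n, Solves Uad e ιY Ψ (αseq n) yδ (y n, u n)) →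
      ∃ φ : ℕ → ℕ, StrictMono φ ∧ ∃ (αstar : Fin r → ℝ) (p : Y × U),
        (∀ i, Tendsto (fun k => αseq (φ k) i) atTop (𝓝 (αstar i))) ∧
        WeakConv (fun k => (y (φ k), u (φ k))) p ∧
        (∀ i, αlo i ≤ αstar i ∧ αstar i ≤ αhi i) ∧
        Solves Uad e ιY Ψ αstar yδ p := by
  classical
  obtain ⟨p0, hp0f, hp0Ψ⟩ := hH5prop
  have hp0Ψi : ∀ i : Fin r, Ψ i p0.2 ≠ ⊤ := by
    intro i
    intro htop
    apply hp0Ψ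
    rw [ENNReal.sum_eq_top]
    exact ⟨i, Finset.mem_univ i, htop⟩
  -- uniform bound for the value at p0
  set B : ℝ≥0∞ := Jfun ιY Ψ αhi yδ p0 with hBdef
  have hBne : B ≠ ⊤ := by
    rw [hBdef]
    simp only [Jfun]
    apply ENNReal.add_ne_top.mpr
    constructor
    · exact ENNReal.ofReal_ne_top
    · rw [ENNReal.sum_ne_top]
      intro i _
      exact ENNReal.mul_ne_top ENNReal.ofReal_ne_top (hp0Ψi i)
  have hJmono : ∀ β : Fin r → ℝ, (∀ i, β i ≤ αhi i) → ∀ q : Y × U,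
      Jfun ιY Ψ β yδ q ≤ Jfun ιY Ψ αhi yδ q := by
    intro β hβ q
    simp only [Jfun]
    apply add_le_add_right
    apply Finset.sum_le_sum
    intro i _
    exact mul_le_mul_left (ENNReal.ofReal_le_ofReal (hβ i)) _
  constructor
  · -- existence of a solution for α = αlo
    haveI : Nonempty ↥(Fad Uad e) := ⟨⟨p0, hp0f⟩⟩
    set I : ℝ≥0∞ := ⨅ q : ↥(Fad Uad e), Jfun ιY Ψ αlo yδ (q : Y × U) with hIdef
    have hIle : I ≤ B := by
      refine le_trans (iInf_le _ ⟨p0, hp0f⟩) ?_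
      exact hJmono αlo hαle p0
    have hIne : I ≠ ⊤ := fun h => hBne (top_le_iff.mp (h ▸ hIle))
    have hmin : ∀ n : ℕ, ∃ q : Y × U, q ∈ Fad Uad e ∧
        Jfun ιY Ψ αlo yδ q ≤ I + ((n : ℝ≥0∞) + 1)⁻¹ := by
      intro n
      have hlt : I < I + ((n : ℝ≥0∞) + 1)⁻¹ := by
        apply ENNReal.lt_add_right hIne
        simp
      rw [hIdef] at hlt
      rw [iInf_lt_iff] at hlt
      obtain ⟨⟨q, hq⟩, hqlt⟩ := hlt
      exact ⟨q, hq, hqlt.le⟩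
    choose qseq hqfeas hqval using hmin
    have hqB : ∀ n, Jfun ιY Ψ αlo yδ (qseq n) ≤ I + 1 := by
      intro n
      refine (hqval n).trans (add_le_add_right ?_ I)
      simp [ENNReal.inv_le_one]
    obtain ⟨φ, hφ, αstar, p, hαconv, hpw, hbox', hpfeas, hlsc⟩ :=
      core_extract hYrefl hUrefl hr ιY Uad e Ψ αlo αhi hαpos hH1 hH3 hH4 hH5coer hH6 yδ
        (I + 1) (ENNReal.add_ne_top.mpr ⟨hIne, ENNReal.one_ne_top⟩)
        (fun _ => αlo) (fun n => (qseq n).1) (fun n => (qseq n).2)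
        (fun n i => ⟨le_refl _, hαle i⟩) (fun n => by simpa using hqfeas n)
        (fun n => by simpa using hqB n)
    have hαstar : αstar = αlo := by
      funext i
      exact tendsto_nhds_unique (hαconv i) tendsto_const_nhds
    rw [hαstar] at hlsc
    have hJle : Jfun ιY Ψ αlo yδ p ≤ I := by
      refine hlsc.trans ?_
      have hmono : liminf (fun k => Jfun ιY Ψ ((fun _ => αlo) (φ k)) yδ
          ((qseq (φ k)).1, (qseq (φ k)).2)) atTop ≤
          liminf (fun k : ℕ => I + ((k : ℝ≥0∞) + 1)⁻¹) atTop := by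
        refine liminf_le_liminf (Eventually.of_forall fun k => ?_)
        have h1 : Jfun ιY Ψ αlo yδ (qseq (φ k)) ≤ I + ((φ k : ℝ≥0∞) + 1)⁻¹ := hqval (φ k)
        have h2 : ((φ k : ℝ≥0∞) + 1)⁻¹ ≤ ((k : ℝ≥0∞) + 1)⁻¹ := by
          apply ENNReal.inv_le_inv.mpr
          have : k ≤ φ k := hφ.le_apply
          exact_mod_cast add_le_add_left (by exact_mod_cast this) 1
        exact le_trans (by simpa using h1) (add_le_add_right h2 I)
      refine hmono.trans ?_
      have htend : Tendsto (fun k : ℕ => I + ((k : ℝ≥0∞) + 1)⁻¹) atTop (𝓝 (I + 0)) := by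
        apply Tendsto.const_add
        have h0 : Tendsto (fun k : ℕ => ((k : ℝ≥0∞))⁻¹) atTop (𝓝 0) :=
          ENNReal.tendsto_inv_nat_nhds_zero
        apply tendsto_of_tendsto_of_tendsto_of_le_of_le tendsto_const_nhds h0
        · exact fun k => zero_le
        · intro k
          exact ENNReal.inv_le_inv.mpr le_self_add
      rw [add_zero] at htend
      exact le_of_eq htend.liminf_eq
    refine ⟨αlo, p, fun i => ⟨le_refl _, hαle i⟩, hpfeas, ?_⟩
    intro q hq
    refine hJle.trans ?_
    exact iInf_le (fun q : ↥(Fad Uad e) => Jfun ιY Ψ αlo yδ (q : Y × U)) ⟨q, hq⟩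
  · -- weak sequential compactness
    intro αseq y u hbox hsol
    have hfeas : ∀ n, (y n, u n) ∈ Fad Uad e := fun n => (hsol n).1
    have hJB : ∀ n, Jfun ιY Ψ (αseq n) yδ (y n, u n) ≤ B := by
      intro n
      refine ((hsol n).2 p0 hp0f).trans ?_
      exact hJmono (αseq n) (fun i => (hbox n i).2) p0
    obtain ⟨φ, hφ, αstar, p, hαconv, hpw, hbox', hpfeas, hlsc⟩ :=
      core_extract hYrefl hUrefl hr ιY Uad e Ψ αlo αhi hαpos hH1 hH3 hH4 hH5coer hH6 yδ
        B hBne αseq y u hbox hfeas hJB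
    refine ⟨φ, hφ, αstar, p, hαconv, hpw, hbox', hpfeas, ?_⟩
    intro q hq
    refine hlsc.trans ?_
    have hmono : liminf (fun k => Jfun ιY Ψ (αseq (φ k)) yδ (y (φ k), u (φ k))) atTop ≤
        liminf (fun k => Jfun ιY Ψ (αseq (φ k)) yδ q) atTop :=
      liminf_le_liminf (Eventually.of_forall fun k => (hsol (φ k)).2 q hq)
    refine hmono.trans (le_of_eq ?_)
    exact (Jfun_tendsto_param ιY Ψ αlo hαpos (fun k => αseq (φ k)) αstar
      (fun k i => (hbox (φ k) i).1) (fun i => (hbox' i).1) hαconv yδ q).liminf_eq
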